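/- Let G : ℝ → ℝ be continuously differentiable, supported in [−1, 0], with ∫ G = 0. Let p_0 : ℝ → ℝ be continuously differentiable with inf_{[−1,2]} p_0 > 0. For bandwidths 0 < h_ν ≤ h_β ≤ 1 and points x_β, x_ν ∈ [0,1], define G_β(y) = h_β^{-1}G(y/h_β) and G_ν(y) = h_ν^{-1}G(y/h_ν). Then |∫ G_β(y − x_β) G_ν(y − x_ν) / p_0(y) dy| ≤ (h_ν / h_β²) · [ (inf p_0)^{-1} ‖G‖_∞ ‖G'‖_∞ + ‖G‖_∞ ‖p_0'‖_∞ (inf p_0)^{-2} (h_β ‖G‖_∞ + h_ν ‖G'‖_∞) ]. -/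

import Mathlib

open MeasureTheory

set_option maxHeartbeats 1000000 in
/-- Bound on the cross term `∫ G_β(y−x_β) G_ν(y−x_ν)/p₀(y) dy` for a C¹ bump
function `G` supported in `[−1,0]` with `∫G = 0`. -/
theorem stmt_10 (G p₀ : ℝ → ℝ) (hG : ContDiff ℝ 1 G)
    (hsupp : Function.support G ⊆ Set.Icc (-1) 0)
    (hGint : ∫ x : ℝ, G x = 0)
    (hp : ContDiff ℝ 1 p₀)
    (m CG CG' Cp' : ℝ) (hm : 0 < m)
    (hmle : ∀ x ∈ Set.Icc (-1 : ℝ) 2, m ≤ p₀ x)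
    (hCG : ∀ x, |G x| ≤ CG) (hCG' : ∀ x, |deriv G x| ≤ CG')
    (hCp' : ∀ x, |deriv p₀ x| ≤ Cp')
    (hβ hν : ℝ) (h1 : 0 < hν) (h2 : hν ≤ hβ) (h3 : hβ ≤ 1)
    (xβ xν : ℝ) (hxβ : xβ ∈ Set.Icc (0:ℝ) 1) (hxν : xν ∈ Set.Icc (0:ℝ) 1) :
    |∫ y : ℝ, (hβ⁻¹ * G ((y - xβ) / hβ)) * (hν⁻¹ * G ((y - xν) / hν)) / p₀ y| ≤
      hν / hβ ^ 2 *
        (m⁻¹ * CG * CG' + CG * Cp' * (m ^ 2)⁻¹ * (hβ * CG + hν * CG')) := by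
  have hβ0 : (0:ℝ) < hβ := lt_of_lt_of_le h1 h2
  have hβne : hβ ≠ 0 := ne_of_gt hβ0
  have hνne : hν ≠ 0 := ne_of_gt h1
  have hmne : m ≠ 0 := ne_of_gt hm
  have hCG0 : 0 ≤ CG := le_trans (abs_nonneg _) (hCG 0)
  have hCG'0 : 0 ≤ CG' := le_trans (abs_nonneg _) (hCG' 0)
  have hCp'0 : 0 ≤ Cp' := le_trans (abs_nonneg _) (hCp' 0)
  set s : Set ℝ := Set.Icc (-1 : ℝ) 2 with hs_def
  -- notation
  set H : ℝ → ℝ := fun y => hβ⁻¹ * G ((y - xβ) / hβ) / p₀ y with hH_def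
  set ν : ℝ → ℝ := fun y => hν⁻¹ * G ((y - xν) / hν) with hν_def
  set M : ℝ := hβ⁻¹ * (CG' * hβ⁻¹) / m + hβ⁻¹ * CG * Cp' / m ^ 2 with hM_def
  have hM0 : 0 ≤ M := by positivity
  have hGdiff : Differentiable ℝ G := hG.differentiable one_ne_zero
  have hpdiff : Differentiable ℝ p₀ := hp.differentiable one_ne_zero
  -- support of ν
  have supp_mem : ∀ y : ℝ, ν y ≠ 0 → y ∈ Set.Icc (xν - hν) xν := by
    intro y hy
    have hGy : G ((y - xν) / hν) ≠ 0 := by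
      intro h; exact hy (by simp [hν_def, h])
    have hu := hsupp (Function.mem_support.mpr hGy)
    obtain ⟨hu1, hu2⟩ := hu
    have e1 : (-1 : ℝ) * hν ≤ y - xν := by
      have := mul_le_mul_of_nonneg_right hu1 (le_of_lt h1)
      rwa [div_mul_cancel₀ _ hνne] at this
    have e2 : y - xν ≤ 0 := by
      have := mul_le_mul_of_nonneg_right hu2 (le_of_lt h1)
      rwa [div_mul_cancel₀ _ hνne, zero_mul] at this
    constructor <;> linarith
  have hsub : Set.Icc (xν - hν) xν ⊆ s := by
    intro y hy
    obtain ⟨a1, a2⟩ := hy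
    obtain ⟨b1, b2⟩ := hxν
    exact ⟨by linarith, by linarith⟩
  -- derivative of H within s
  set D : ℝ → ℝ := fun x =>
    (hβ⁻¹ * (deriv G ((x - xβ) / hβ) * hβ⁻¹) * p₀ x
      - hβ⁻¹ * G ((x - xβ) / hβ) * deriv p₀ x) / p₀ x ^ 2 with hD_def
  have hderiv : ∀ x ∈ s, HasDerivWithinAt H (D x) s x := by
    intro x hx
    have hpx : (0:ℝ) < p₀ x := lt_of_lt_of_le hm (hmle x hx)
    have hinner : HasDerivAt (fun y : ℝ => (y - xβ) / hβ) hβ⁻¹ x := by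
      simpa [one_div] using ((hasDerivAt_id x).sub_const xβ).div_const hβ
    have hcomp : HasDerivAt (fun y : ℝ => G ((y - xβ) / hβ))
        (deriv G ((x - xβ) / hβ) * hβ⁻¹) x :=
      (hGdiff ((x - xβ) / hβ)).hasDerivAt.comp x hinner
    have hnum : HasDerivAt (fun y : ℝ => hβ⁻¹ * G ((y - xβ) / hβ))
        (hβ⁻¹ * (deriv G ((x - xβ) / hβ) * hβ⁻¹)) x := hcomp.const_mul hβ⁻¹
    have hden : HasDerivAt p₀ (deriv p₀ x) x := (hpdiff x).hasDerivAt
    exact ((hnum.div hden (ne_of_gt hpx))).hasDerivWithinAt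
  -- bound on D on s
  have hDbound : ∀ x ∈ s, |D x| ≤ M := by
    intro x hx
    have hpx : (0:ℝ) < p₀ x := lt_of_lt_of_le hm (hmle x hx)
    have hmpx : m ≤ p₀ x := hmle x hx
    set A : ℝ := hβ⁻¹ * (deriv G ((x - xβ) / hβ) * hβ⁻¹) with hA_def
    set B : ℝ := hβ⁻¹ * G ((x - xβ) / hβ) with hB_def
    have hAb : |A| ≤ hβ⁻¹ * (CG' * hβ⁻¹) := by
      rw [hA_def, abs_mul, abs_mul, abs_of_pos (inv_pos.mpr hβ0)]
      gcongr
      exact hCG' _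
    have hBb : |B| ≤ hβ⁻¹ * CG := by
      rw [hB_def, abs_mul, abs_of_pos (inv_pos.mpr hβ0)]
      gcongr
      exact hCG _
    calc |D x| = |A * p₀ x - B * deriv p₀ x| / p₀ x ^ 2 := by
          rw [hD_def, abs_div, abs_pow, abs_of_pos hpx]
      _ ≤ (|A| * p₀ x + |B| * |deriv p₀ x|) / p₀ x ^ 2 := by
          gcongr
          calc |A * p₀ x - B * deriv p₀ x| ≤ |A * p₀ x| + |B * deriv p₀ x| :=
                abs_sub _ _
            _ = |A| * p₀ x + |B| * |deriv p₀ x| := by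
                rw [abs_mul A (p₀ x), abs_mul B (deriv p₀ x), abs_of_pos hpx]
      _ = |A| / p₀ x + |B| * |deriv p₀ x| / p₀ x ^ 2 := by
          field_simp
      _ ≤ hβ⁻¹ * (CG' * hβ⁻¹) / m + hβ⁻¹ * CG * Cp' / m ^ 2 := by
          have t1 : |A| / p₀ x ≤ hβ⁻¹ * (CG' * hβ⁻¹) / m :=
            div_le_div₀ (by positivity) hAb hm hmpx
          have t2 : |B| * |deriv p₀ x| / p₀ x ^ 2 ≤ hβ⁻¹ * CG * Cp' / m ^ 2 := by
            apply div_le_div₀ (by positivity) ?_ (by positivity)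
              (pow_le_pow_left₀ (le_of_lt hm) hmpx 2)
            exact mul_le_mul hBb (hCp' x) (abs_nonneg _) (by positivity)
          linarith
  -- MVT bound
  have hMVT : ∀ y ∈ s, |H y - H xν| ≤ M * |y - xν| := by
    intro y hy
    have hxνs : xν ∈ s := by
      obtain ⟨b1, b2⟩ := hxν
      exact ⟨by linarith, by linarith⟩
    have := (convex_Icc (-1:ℝ) 2).norm_image_sub_le_of_norm_hasDerivWithin_le
      hderiv (fun x hx => by simpa using hDbound x hx) hxνs hy
    simpa using this
  -- pointwise bound
  have hpointwise : ∀ y : ℝ,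
      |(hβ⁻¹ * G ((y - xβ) / hβ)) * (hν⁻¹ * G ((y - xν) / hν)) / p₀ y - ν y * H xν|
        ≤ |ν y| * (M * hν) := by
    intro y
    have heq : (hβ⁻¹ * G ((y - xβ) / hβ)) * (hν⁻¹ * G ((y - xν) / hν)) / p₀ y
        - ν y * H xν = ν y * (H y - H xν) := by
      simp only [hν_def, hH_def]
      ring
    rw [heq, abs_mul]
    by_cases hy : ν y = 0
    · simp [hy]
    · have hys : y ∈ s := hsub (supp_mem y hy)
      have h5 : |H y - H xν| ≤ M * |y - xν| := hMVT y hys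
      have h6 : |y - xν| ≤ hν := by
        obtain ⟨c1, c2⟩ := supp_mem y hy
        rw [abs_le]; constructor <;> linarith
      have h7 : M * |y - xν| ≤ M * hν := by gcongr
      exact mul_le_mul_of_nonneg_left (h5.trans h7) (abs_nonneg _)
  -- continuity / integrability of ν
  have hνcont : Continuous ν := by
    apply Continuous.mul continuous_const
    exact hG.continuous.comp ((continuous_id.sub continuous_const).div_const hν)
  have hνcs : HasCompactSupport ν :=
    HasCompactSupport.intro isCompact_Icc
      (fun y hy => by by_contra h; exact hy (supp_mem y h))
  have hνint : Integrable ν := hνcont.integrable_of_hasCompactSupport hνcs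
  have habsνint : Integrable (fun y => |ν y| * (M * hν)) :=
    (hνint.abs.mul_const _)
  -- ∫ ν = 0
  have hintν : ∫ y : ℝ, ν y = 0 := by
    have h8 : ∫ y : ℝ, G ((y - xν) / hν) = |hν| • ∫ x : ℝ, G x := by
      rw [show (fun y : ℝ => G ((y - xν) / hν)) = (fun y : ℝ => (fun z => G (z / hν)) (y - xν))
        from rfl]
      rw [integral_sub_right_eq_self (fun z => G (z / hν)) xν]
      exact Measure.integral_comp_div G hν
    simp only [hν_def]
    rw [integral_const_mul, h8, hGint]
    simp
  -- ∫ |ν| ≤ CG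
  have hintabsG : ∫ x : ℝ, |G x| ≤ CG := by
    have hsupp' : Function.support (fun x => |G x|) ⊆ Set.Icc (-1 : ℝ) 0 := by
      intro x hx
      apply hsupp
      simp only [Function.mem_support] at hx ⊢
      intro h; exact hx (by simp [h])
    have e1 : ∫ x : ℝ, |G x| = ∫ x in Set.Icc (-1:ℝ) 0, |G x| := by
      refine (setIntegral_eq_integral_of_forall_compl_eq_zero ?_).symm
      intro x hx
      by_contra h
      exact hx (hsupp' h)
    rw [e1]
    calc ∫ x in Set.Icc (-1:ℝ) 0, |G x| ≤ ∫ _x in Set.Icc (-1:ℝ) 0, CG := by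
          apply setIntegral_mono_on
          · exact (hG.continuous.abs.integrable_of_hasCompactSupport
              (HasCompactSupport.intro isCompact_Icc (fun y hy => by
                by_contra h; exact hy (hsupp' h)))).integrableOn
          · exact (integrableOn_const_iff (C := CG)).mpr (Or.inr (by simp))
          · exact measurableSet_Icc
          · intro x _; exact hCG x
      _ = CG := by simp
  have hintabsν : ∫ y : ℝ, |ν y| ≤ CG := by
    have e2 : ∀ y : ℝ, |ν y| = hν⁻¹ * |G ((y - xν) / hν)| := by
      intro y
      rw [hν_def]
      simp only []
      rw [abs_mul, abs_of_pos (inv_pos.mpr h1)]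
    calc ∫ y : ℝ, |ν y| = hν⁻¹ * ∫ y : ℝ, |G ((y - xν) / hν)| := by
          simp_rw [e2]; exact integral_const_mul _ _
      _ = hν⁻¹ * (|hν| * ∫ x : ℝ, |G x|) := by
          congr 1
          rw [show (fun y : ℝ => |G ((y - xν) / hν)|)
              = (fun y : ℝ => (fun z => |G (z / hν)|) (y - xν)) from rfl]
          rw [integral_sub_right_eq_self (fun z => |G (z / hν)|) xν]
          have := Measure.integral_comp_div (fun x => |G x|) hν
          simpa using this
      _ = ∫ x : ℝ, |G x| := by
          rw [abs_of_pos h1]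
          field_simp
      _ ≤ CG := hintabsG
  -- measurability of the integrand
  have hmeas : AEStronglyMeasurable
      (fun y : ℝ => (hβ⁻¹ * G ((y - xβ) / hβ)) * (hν⁻¹ * G ((y - xν) / hν)) / p₀ y) volume := by
    apply Measurable.aestronglyMeasurable
    apply Measurable.div
    · exact ((continuous_const.mul
          (hG.continuous.comp ((continuous_id.sub continuous_const).div_const hβ))).measurable.mul
        ((continuous_const.mul
          (hG.continuous.comp ((continuous_id.sub continuous_const).div_const hν))).measurable))
    · exact hp.continuous.measurable
  -- φ := ν * H xν integrable with integral 0
  have hφint : Integrable (fun y => ν y * H xν) := hνint.mul_const _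
  have hφzero : ∫ y : ℝ, ν y * H xν = 0 := by
    rw [integral_mul_const, hintν, zero_mul]
  -- f - φ integrable
  have hdiffint : Integrable
      (fun y : ℝ => (hβ⁻¹ * G ((y - xβ) / hβ)) * (hν⁻¹ * G ((y - xν) / hν)) / p₀ y
        - ν y * H xν) := by
    apply Integrable.mono' habsνint
    · exact hmeas.sub (hφint.aestronglyMeasurable)
    · exact Filter.Eventually.of_forall (fun y => by
        rw [Real.norm_eq_abs]; exact hpointwise y)
  have hfint : Integrable
      (fun y : ℝ => (hβ⁻¹ * G ((y - xβ) / hβ)) * (hν⁻¹ * G ((y - xν) / hν)) / p₀ y) := by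
    have heq2 : (fun y : ℝ => (hβ⁻¹ * G ((y - xβ) / hβ)) * (hν⁻¹ * G ((y - xν) / hν)) / p₀ y)
        = fun y : ℝ => ((hβ⁻¹ * G ((y - xβ) / hβ)) * (hν⁻¹ * G ((y - xν) / hν)) / p₀ y
            - ν y * H xν) + ν y * H xν := by
      funext y; ring
    rw [heq2]
    exact hdiffint.add hφint
  -- main bound
  have hmain : |∫ y : ℝ, (hβ⁻¹ * G ((y - xβ) / hβ)) * (hν⁻¹ * G ((y - xν) / hν)) / p₀ y|
      ≤ M * hν * CG := by
    have e3 : ∫ y : ℝ, (hβ⁻¹ * G ((y - xβ) / hβ)) * (hν⁻¹ * G ((y - xν) / hν)) / p₀ y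
        = ∫ y : ℝ, ((hβ⁻¹ * G ((y - xβ) / hβ)) * (hν⁻¹ * G ((y - xν) / hν)) / p₀ y
            - ν y * H xν) := by
      rw [integral_sub hfint hφint, hφzero, sub_zero]
    rw [e3]
    calc |∫ y : ℝ, ((hβ⁻¹ * G ((y - xβ) / hβ)) * (hν⁻¹ * G ((y - xν) / hν)) / p₀ y
            - ν y * H xν)|
        ≤ ∫ y : ℝ, |ν y| * (M * hν) := by
          have := norm_integral_le_of_norm_le habsνint
            (Filter.Eventually.of_forall (fun y => by
              rw [Real.norm_eq_abs]; exact hpointwise y))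
          simpa using this
      _ = (∫ y : ℝ, |ν y|) * (M * hν) := integral_mul_const _ _
      _ ≤ CG * (M * hν) := by
          apply mul_le_mul_of_nonneg_right hintabsν
          positivity
      _ = M * hν * CG := by ring
  -- final arithmetic
  refine hmain.trans ?_
  have key : hν / hβ ^ 2 * (m⁻¹ * CG * CG' + CG * Cp' * (m ^ 2)⁻¹ * (hβ * CG + hν * CG'))
      - M * hν * CG = hν ^ 2 * CG * Cp' * CG' / (m ^ 2 * hβ ^ 2) := by
    rw [hM_def]
    field_simp
    ring
  have pos : 0 ≤ hν ^ 2 * CG * Cp' * CG' / (m ^ 2 * hβ ^ 2) := by positivity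
  linarith
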